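/- Let (X, d_X) and (Y, d_Y) be non-Archimedean metric spaces such that every ball in X contains at least two distinct points. For any λ > 0 and P₁, P₂ ∈ D♭(X, Y): β^{*λ}_{X,Y}(P₁, P₂) ≤ ρ_s(P₁, P₂) ≤ β^λ_{X,Y}(P₁, P₂), and ρ_H(P₁, P₂) ≤ max{1, λ} · β^{*λ}_{X,Y}(P₁, P₂). In particular, if P₁, P₂ ∈ D♭^{(1)}(X, Y), then ρ_H(P₁, P₂) = ρ_s(P₁, P₂) = β_{X,Y}(P₁, P₂) = β^*_{X,Y}(P₁, P₂), where β_{X,Y} = β^1_{X,Y} and β^*_{X,Y} = β^{*1}_{X,Y}. -/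

import Mathlib

open scoped ENNReal

/-- A ball in a metric space: an open or closed ball of positive radius. -/
def IsBall {X : Type*} [MetricSpace X] (B : Set X) : Prop :=
  ∃ (a : X) (r : ℝ), 0 < r ∧ (B = Metric.ball a r ∨ B = Metric.closedBall a r)

/-- The type `M♭(X)` of all balls of `X`. -/
abbrev BallSet (X : Type*) [MetricSpace X] := {B : Set X // IsBall B}

-- `β^λ_{X,Y}(P₁,P₂)`: zero if `P₁ = P₂`; otherwise the infimum of those `ε > 0` such that
-- `d_Y(P₁(B), P₂(B^{λε})) ≤ ε` and `d_Y(P₂(B), P₁(B^{λε})) ≤ ε` for every ball `B`, where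
-- `B^{δ}` denotes the `δ`-neighborhood (thickening) of `B`, which is again a ball.
open Classical in
noncomputable def betaL {X Y : Type*} [MetricSpace X] [MetricSpace Y]
    (lam : ℝ) (P₁ P₂ : BallSet X → Y) : ℝ≥0∞ :=
  if P₁ = P₂ then 0 else
    sInf {e : ℝ≥0∞ | ∃ ε : ℝ, 0 < ε ∧ e = ENNReal.ofReal ε ∧
      ∀ B : BallSet X, ∃ B' : BallSet X,
        (B' : Set X) = Metric.thickening (lam * ε) (B : Set X) ∧
        edist (P₁ B) (P₂ B') ≤ ENNReal.ofReal ε ∧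
        edist (P₂ B) (P₁ B') ≤ ENNReal.ofReal ε}

/-- `β^{*λ}_{X,Y}(P₁,P₂)`: the infimum of those `ε > 0` such that for every ball `B` there
exist positive `ε_B, ε'_B ≤ ε` with `d_Y(P₁(B), P₂(B^{λε_B})) ≤ ε` and
`d_Y(P₂(B), P₁(B^{λε'_B})) ≤ ε`. -/
noncomputable def betaStarL {X Y : Type*} [MetricSpace X] [MetricSpace Y]
    (lam : ℝ) (P₁ P₂ : BallSet X → Y) : ℝ≥0∞ :=
  sInf {e : ℝ≥0∞ | ∃ ε : ℝ, 0 < ε ∧ e = ENNReal.ofReal ε ∧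
    ∀ B : BallSet X, ∃ εB εB' : ℝ, 0 < εB ∧ εB ≤ ε ∧ 0 < εB' ∧ εB' ≤ ε ∧
      ∃ B' B'' : BallSet X,
        (B' : Set X) = Metric.thickening (lam * εB) (B : Set X) ∧
        (B'' : Set X) = Metric.thickening (lam * εB') (B : Set X) ∧
        edist (P₁ B) (P₂ B') ≤ ENNReal.ofReal ε ∧
        edist (P₂ B) (P₁ B'') ≤ ENNReal.ofReal ε}

/-- `ρ_s(P₁,P₂) = sup_{B ∈ M♭(X)} d_Y(P₁(B), P₂(B))`. -/
noncomputable def rhoSB {X Y : Type*} [MetricSpace X] [MetricSpace Y]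
    (P₁ P₂ : BallSet X → Y) : ℝ≥0∞ :=
  ⨆ B : BallSet X, edist (P₁ B) (P₂ B)

/-- `ρ_H(P₁,P₂)`: the Hausdorff distance between the graphs of `P₁` and `P₂` inside
`W = M♭(X) × Y` with the sup-metric `max (d_{X,H}, d_Y)`, written out via the
`sup-inf` formula for the Hausdorff distance. -/
noncomputable def rhoHB {X Y : Type*} [MetricSpace X] [MetricSpace Y]
    (P₁ P₂ : BallSet X → Y) : ℝ≥0∞ :=
  max
    (⨆ B : BallSet X, ⨅ B' : BallSet X,
      max (EMetric.hausdorffEdist (B : Set X) (B' : Set X)) (edist (P₁ B) (P₂ B')))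
    (⨆ B : BallSet X, ⨅ B' : BallSet X,
      max (EMetric.hausdorffEdist (B : Set X) (B' : Set X)) (edist (P₂ B) (P₁ B')))

/-- Membership in `D♭^{(1)}(X,Y)`: `d_Y(P(B), P(B^ε)) ≤ ε` for all `ε > 0` and all balls `B`. -/
def memDflatOne {X Y : Type*} [MetricSpace X] [MetricSpace Y] (P : BallSet X → Y) : Prop :=
  ∀ ε : ℝ, 0 < ε → ∀ B B' : BallSet X,
    (B' : Set X) = Metric.thickening ε (B : Set X) → edist (P B) (P B') ≤ ENNReal.ofReal ε


open Metric EMetric Set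

section NA
variable {X : Type*} [MetricSpace X]

lemma na_thick_ball (hna : ∀ x y z : X, dist x z ≤ max (dist x y) (dist y z))
    {a : X} {r δ : ℝ} (hr : 0 < r) (hδ : 0 < δ) :
    thickening δ (ball a r) = ball a (max r δ) := by
  ext x
  rw [mem_thickening_iff]
  constructor
  · rintro ⟨y, hy, hxy⟩
    simp only [Metric.mem_ball] at hy ⊢
    exact lt_of_le_of_lt (hna x y a)
      (max_lt (hxy.trans_le (le_max_right _ _)) (hy.trans_le (le_max_left _ _)))
  · intro hx
    simp only [Metric.mem_ball] at hx
    by_cases h : dist x a < r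
    · exact ⟨x, Metric.mem_ball.2 h, by simpa using hδ⟩
    · refine ⟨a, mem_ball_self hr, ?_⟩
      rcases max_cases r δ with ⟨he, _⟩ | ⟨he, _⟩
      · exact absurd (he ▸ hx) h
      · exact he ▸ hx

lemma na_thick_cball_le (hna : ∀ x y z : X, dist x z ≤ max (dist x y) (dist y z))
    {a : X} {r δ : ℝ} (hδ : 0 < δ) (h : δ ≤ r) :
    thickening δ (closedBall a r) = closedBall a r := by
  ext x
  rw [mem_thickening_iff]
  constructor
  · rintro ⟨y, hy, hxy⟩
    simp only [Metric.mem_closedBall] at hy ⊢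
    exact le_trans (hna x y a) (max_le (le_of_lt (hxy.trans_le h)) hy)
  · intro hx
    exact ⟨x, hx, by simpa using hδ⟩

lemma na_thick_cball_gt (hna : ∀ x y z : X, dist x z ≤ max (dist x y) (dist y z))
    {a : X} {r δ : ℝ} (hr : 0 ≤ r) (h : r < δ) :
    thickening δ (closedBall a r) = ball a δ := by
  ext x
  rw [mem_thickening_iff]
  constructor
  · rintro ⟨y, hy, hxy⟩
    simp only [Metric.mem_closedBall] at hy
    simp only [Metric.mem_ball]
    exact lt_of_le_of_lt (hna x y a) (max_lt hxy (hy.trans_lt h))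
  · intro hx
    exact ⟨a, Metric.mem_closedBall_self hr, Metric.mem_ball.1 hx⟩

lemma na_isBall_thick (hna : ∀ x y z : X, dist x z ≤ max (dist x y) (dist y z))
    {B : Set X} (hB : IsBall B) {δ : ℝ} (hδ : 0 < δ) : IsBall (thickening δ B) := by
  obtain ⟨a, r, hr, hB | hB⟩ := hB <;> subst hB
  · exact ⟨a, max r δ, lt_max_of_lt_left hr, Or.inl (na_thick_ball hna hr hδ)⟩
  · by_cases h : δ ≤ r
    · exact ⟨a, r, hr, Or.inr (na_thick_cball_le hna hδ h)⟩
    · exact ⟨a, δ, hδ, Or.inl (na_thick_cball_gt hna hr.le (not_le.1 h))⟩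

lemma na_thick_thick (hna : ∀ x y z : X, dist x z ≤ max (dist x y) (dist y z))
    {B : Set X} (hB : IsBall B) {δ' δ : ℝ} (h0 : 0 < δ') (h : δ' ≤ δ) :
    thickening δ (thickening δ' B) = thickening δ B := by
  have hδ : 0 < δ := h0.trans_le h
  obtain ⟨a, r, hr, hB | hB⟩ := hB <;> subst hB
  · rw [na_thick_ball hna hr h0, na_thick_ball hna (lt_max_of_lt_left hr) hδ,
      na_thick_ball hna hr hδ, max_assoc, max_eq_right h]
  · by_cases hc : δ' ≤ r
    · rw [na_thick_cball_le hna h0 hc]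
    · push_neg at hc
      rw [na_thick_cball_gt hna hr.le hc, na_thick_ball hna h0 hδ, max_eq_right h,
        na_thick_cball_gt hna hr.le (hc.trans_le h)]

lemma na_thick_eq_self (hna : ∀ x y z : X, dist x z ≤ max (dist x y) (dist y z))
    {a : X} {r δ : ℝ} (hδ : 0 < δ) (hδr : δ ≤ r)
    {B : Set X} (hB : B = ball a r ∨ B = closedBall a r) : thickening δ B = B := by
  have hr : 0 < r := hδ.trans_le hδr
  rcases hB with hB | hB <;> subst hB
  · rw [na_thick_ball hna hr hδ, max_eq_left hδr]
  · exact na_thick_cball_le hna hδ hδr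

lemma haus_thick_le {δ : ℝ} (hδ : 0 < δ) (s : Set X) :
    hausdorffEdist s (thickening δ s) ≤ ENNReal.ofReal δ := by
  apply hausdorffEdist_le_of_infEdist
  · intro x hx
    rw [infEdist_zero_of_mem (self_subset_thickening hδ s hx)]
    exact zero_le
  · intro x hx
    exact (mem_thickening_iff_infEdist_lt.1 hx).le

lemma na_thick_eq_of_haus (hna : ∀ x y z : X, dist x z ≤ max (dist x y) (dist y z))
    {B B' : Set X} (hB : IsBall B) (hB' : IsBall B') {δ : ℝ} (hδ : 0 < δ)
    (h : hausdorffEdist B B' < ENNReal.ofReal δ) :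
    thickening δ B = thickening δ B' := by
  have key : ∀ C C' : Set X, IsBall C → hausdorffEdist C C' < ENNReal.ofReal δ →
      thickening δ C' ⊆ thickening δ C := by
    intro C C' hC hh
    have hsub : C' ⊆ thickening δ C := by
      intro x hx
      rw [mem_thickening_iff_infEdist_lt]
      calc infEdist x C ≤ hausdorffEdist C' C := infEdist_le_hausdorffEdist_of_mem hx
        _ < ENNReal.ofReal δ := by exact lt_of_eq_of_lt hausdorffEdist_comm hh
    calc thickening δ C' ⊆ thickening δ (thickening δ C) := thickening_subset_of_subset δ hsub
      _ = thickening δ C := na_thick_thick hna hC hδ le_rfl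
  exact subset_antisymm (key B' B hB' (by exact lt_of_eq_of_lt hausdorffEdist_comm h)) (key B B' hB h)

end NA

lemma edist_na {Y : Type*} [MetricSpace Y]
    (hna : ∀ x y z : Y, dist x z ≤ max (dist x y) (dist y z)) (a b c : Y) :
    edist a c ≤ max (edist a b) (edist b c) := by
  rcases le_total (dist a b) (dist b c) with h | h
  · refine le_max_of_le_right ?_
    rw [edist_dist, edist_dist]
    exact ENNReal.ofReal_le_ofReal ((hna a b c).trans (max_le h le_rfl))
  · refine le_max_of_le_left ?_
    rw [edist_dist, edist_dist]
    exact ENNReal.ofReal_le_ofReal ((hna a b c).trans (max_le le_rfl h))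
section Main
variable {X Y : Type*} [MetricSpace X] [MetricSpace Y]

lemma lemB (hnaX : ∀ x y z : X, dist x z ≤ max (dist x y) (dist y z))
    (hnaY : ∀ x y z : Y, dist x z ≤ max (dist x y) (dist y z))
    {lam : ℝ} (hlam : 0 < lam) (P₁ P₂ : BallSet X → Y) :
    rhoSB P₁ P₂ ≤ betaL lam P₁ P₂ := by
  unfold betaL
  split_ifs with h
  · subst h; simp [rhoSB]
  apply le_sInf
  rintro e ⟨ε, hε, rfl, hprop⟩
  apply iSup_le
  intro B
  obtain ⟨B', hB', h1, h2⟩ := hprop B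
  obtain ⟨B'', hB'', h1', h2'⟩ := hprop B'
  have hle : 0 < lam * ε := mul_pos hlam hε
  have hBB : B'' = B' := Subtype.ext (by
    rw [hB'', hB', na_thick_thick hnaX B.2 hle le_rfl])
  rw [hBB] at h2'
  have hA : edist (P₂ B') (P₂ B) ≤ ENNReal.ofReal ε :=
    le_trans (edist_na hnaY _ (P₁ B') _) (max_le h2' (by rw [edist_comm]; exact h2))
  exact le_trans (edist_na hnaY _ (P₂ B') _) (max_le h1 hA)

lemma lemA (hnaX : ∀ x y z : X, dist x z ≤ max (dist x y) (dist y z))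
    {lam : ℝ} (hlam : 0 < lam) (P₁ P₂ : BallSet X → Y) :
    betaStarL lam P₁ P₂ ≤ rhoSB P₁ P₂ := by
  by_cases htop : rhoSB P₁ P₂ = ⊤
  · rw [htop]; exact le_top
  refine ENNReal.le_of_forall_pos_le_add fun η hη _ => ?_
  set ε : ℝ := (rhoSB P₁ P₂).toReal + η with hεdef
  have hη' : (0:ℝ) < η := hη
  have hε : 0 < ε := add_pos_of_nonneg_of_pos ENNReal.toReal_nonneg hη'
  have hεeq : ENNReal.ofReal ε = rhoSB P₁ P₂ + η := by
    rw [hεdef, ENNReal.ofReal_add ENNReal.toReal_nonneg η.coe_nonneg,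
      ENNReal.ofReal_toReal htop, ENNReal.ofReal_coe_nnreal]
  have hrs : rhoSB P₁ P₂ ≤ ENNReal.ofReal ε := by rw [hεeq]; exact le_self_add
  have key : betaStarL lam P₁ P₂ ≤ ENNReal.ofReal ε := by
    apply sInf_le
    refine ⟨ε, hε, rfl, fun B => ?_⟩
    obtain ⟨a, r, hr, hrep⟩ := B.2
    have hpos : 0 < min ε (r / lam) := lt_min hε (div_pos hr hlam)
    have hfix : Metric.thickening (lam * min ε (r / lam)) (B : Set X) = (B : Set X) := by
      apply na_thick_eq_self hnaX (mul_pos hlam hpos) ?_ hrep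
      calc lam * min ε (r / lam) ≤ lam * (r / lam) :=
            mul_le_mul_of_nonneg_left (min_le_right _ _) hlam.le
        _ = r := by rw [mul_comm, div_mul_cancel₀ r hlam.ne']
    refine ⟨min ε (r / lam), min ε (r / lam), hpos, min_le_left _ _, hpos,
      min_le_left _ _, B, B, hfix.symm, hfix.symm, ?_, ?_⟩
    · exact le_trans (le_iSup (fun B => edist (P₁ B) (P₂ B)) B) hrs
    · rw [edist_comm]
      exact le_trans (le_iSup (fun B => edist (P₁ B) (P₂ B)) B) hrs
  rw [hεeq] at key
  exact key

lemma lemC (hnaX : ∀ x y z : X, dist x z ≤ max (dist x y) (dist y z))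
    {lam : ℝ} (hlam : 0 < lam) (P₁ P₂ : BallSet X → Y) :
    rhoHB P₁ P₂ ≤ ENNReal.ofReal (max 1 lam) * betaStarL lam P₁ P₂ := by
  set c := ENNReal.ofReal (max 1 lam) with hc
  have hc0 : c ≠ 0 := (ENNReal.ofReal_pos.2 (lt_of_lt_of_le one_pos (le_max_left _ _))).ne'
  have hct : c ≠ ⊤ := ENNReal.ofReal_ne_top
  have hm : (0:ℝ) ≤ max 1 lam := le_trans zero_le_one (le_max_left _ _)
  have key : ∀ e ∈ {e : ℝ≥0∞ | ∃ ε : ℝ, 0 < ε ∧ e = ENNReal.ofReal ε ∧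
      ∀ B : BallSet X, ∃ εB εB' : ℝ, 0 < εB ∧ εB ≤ ε ∧ 0 < εB' ∧ εB' ≤ ε ∧
        ∃ B' B'' : BallSet X,
          (B' : Set X) = Metric.thickening (lam * εB) (B : Set X) ∧
          (B'' : Set X) = Metric.thickening (lam * εB') (B : Set X) ∧
          edist (P₁ B) (P₂ B') ≤ ENNReal.ofReal ε ∧
          edist (P₂ B) (P₁ B'') ≤ ENNReal.ofReal ε},
      rhoHB P₁ P₂ ≤ c * e := by
    rintro e ⟨ε, hε, rfl, hprop⟩
    have hce : c * ENNReal.ofReal ε = ENNReal.ofReal (max 1 lam * ε) :=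
      (ENNReal.ofReal_mul hm).symm
    rw [hce]
    have hεle : ε ≤ max 1 lam * ε := by nlinarith [le_max_left 1 lam]
    have hlamle : ∀ t : ℝ, 0 < t → t ≤ ε → lam * t ≤ max 1 lam * ε := by
      intro t ht htε
      calc lam * t ≤ lam * ε := mul_le_mul_of_nonneg_left htε hlam.le
        _ ≤ max 1 lam * ε := mul_le_mul_of_nonneg_right (le_max_right _ _) hε.le
    apply max_le
    · apply iSup_le
      intro B
      obtain ⟨εB, εB', hεB, hεBle, hεB', hεB'le, B', B'', hB', hB'', h1, h2⟩ := hprop B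
      refine iInf_le_of_le B' (max_le ?_ (h1.trans (ENNReal.ofReal_le_ofReal hεle)))
      rw [hB']
      exact (haus_thick_le (mul_pos hlam hεB) _).trans
        (ENNReal.ofReal_le_ofReal (hlamle εB hεB hεBle))
    · apply iSup_le
      intro B
      obtain ⟨εB, εB', hεB, hεBle, hεB', hεB'le, B', B'', hB', hB'', h1, h2⟩ := hprop B
      refine iInf_le_of_le B'' (max_le ?_ (h2.trans (ENNReal.ofReal_le_ofReal hεle)))
      rw [hB'']
      exact (haus_thick_le (mul_pos hlam hεB') _).trans
        (ENNReal.ofReal_le_ofReal (hlamle εB' hεB' hεB'le))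
  unfold betaStarL
  rw [mul_comm, ← ENNReal.div_le_iff_le_mul (Or.inl hc0) (Or.inl hct)]
  apply le_sInf
  intro e he
  rw [ENNReal.div_le_iff_le_mul (Or.inl hc0) (Or.inl hct), mul_comm]
  exact key e he

lemma lemD (hnaX : ∀ x y z : X, dist x z ≤ max (dist x y) (dist y z))
    (hnaY : ∀ x y z : Y, dist x z ≤ max (dist x y) (dist y z))
    (P₁ P₂ : BallSet X → Y) (h₁ : memDflatOne P₁) (h₂ : memDflatOne P₂) :
    betaL 1 P₁ P₂ ≤ betaStarL 1 P₁ P₂ := by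
  unfold betaL betaStarL
  split_ifs with h
  · exact zero_le
  apply sInf_le_sInf
  rintro e ⟨ε, hε, rfl, hprop⟩
  refine ⟨ε, hε, rfl, fun B => ?_⟩
  obtain ⟨εB, εB', hεB, hεBle, hεB', hεB'le, B', B'', hB', hB'', h1, h2⟩ := hprop B
  have hε1 : (0:ℝ) < 1 * ε := by rwa [one_mul]
  have hthick : IsBall (Metric.thickening (1 * ε) (B : Set X)) :=
    na_isBall_thick hnaX B.2 hε1
  refine ⟨⟨Metric.thickening (1 * ε) (B : Set X), hthick⟩, rfl, ?_, ?_⟩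
  · have e1 : Metric.thickening (1 * ε) (B : Set X) = Metric.thickening ε (B' : Set X) := by
      rw [one_mul, hB', one_mul, na_thick_thick hnaX B.2 hεB hεBle]
    exact le_trans (edist_na hnaY _ (P₂ B') _) (max_le h1 (h₂ ε hε B' _ e1))
  · have e2 : Metric.thickening (1 * ε) (B : Set X) = Metric.thickening ε (B'' : Set X) := by
      rw [one_mul, hB'', one_mul, na_thick_thick hnaX B.2 hεB' hεB'le]
    exact le_trans (edist_na hnaY _ (P₁ B'') _) (max_le h2 (h₁ ε hε B'' _ e2))

lemma lemE (hnaX : ∀ x y z : X, dist x z ≤ max (dist x y) (dist y z))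
    (hnaY : ∀ x y z : Y, dist x z ≤ max (dist x y) (dist y z))
    (P₁ P₂ : BallSet X → Y) (h₂ : memDflatOne P₂) :
    rhoSB P₁ P₂ ≤ rhoHB P₁ P₂ := by
  refine le_trans ?_ (le_max_left _ _)
  apply iSup_le
  intro B
  refine le_iSup_of_le B (le_iInf fun B' => ?_)
  by_cases hH : EMetric.hausdorffEdist (B : Set X) (B' : Set X) = ⊤
  · rw [hH]; exact le_max_of_le_left le_top
  refine ENNReal.le_of_forall_pos_le_add fun η hη _ => ?_
  set H := EMetric.hausdorffEdist (B : Set X) (B' : Set X) with hHdef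
  have hη' : (0:ℝ) < η := hη
  set δ : ℝ := H.toReal + η with hδdef
  have hδ : 0 < δ := add_pos_of_nonneg_of_pos ENNReal.toReal_nonneg hη'
  have hHδ : H < ENNReal.ofReal δ := by
    rw [ENNReal.lt_ofReal_iff_toReal_lt hH]
    exact lt_add_of_pos_right _ hη'
  have heq := na_thick_eq_of_haus hnaX B.2 B'.2 hδ hHδ
  set Bδ : BallSet X := ⟨Metric.thickening δ (B : Set X), na_isBall_thick hnaX B.2 hδ⟩ with hBδ
  have k1 : edist (P₂ B) (P₂ Bδ) ≤ ENNReal.ofReal δ := h₂ δ hδ B Bδ rfl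
  have k2 : edist (P₂ B') (P₂ Bδ) ≤ ENNReal.ofReal δ := h₂ δ hδ B' Bδ heq
  have k : edist (P₂ B') (P₂ B) ≤ ENNReal.ofReal δ :=
    le_trans (edist_na hnaY _ (P₂ Bδ) _) (max_le k2 (by rw [edist_comm]; exact k1))
  have hδe : ENNReal.ofReal δ = H + η := by
    rw [hδdef, ENNReal.ofReal_add ENNReal.toReal_nonneg η.coe_nonneg,
      ENNReal.ofReal_toReal hH, ENNReal.ofReal_coe_nnreal]
  calc edist (P₁ B) (P₂ B)
      ≤ max (edist (P₁ B) (P₂ B')) (ENNReal.ofReal δ) :=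
        le_trans (edist_na hnaY _ (P₂ B') _) (max_le_max le_rfl k)
    _ ≤ max H (edist (P₁ B) (P₂ B')) + η := by
        rw [hδe]
        apply max_le
        · exact le_add_right (le_max_right _ _)
        · exact add_le_add (le_max_left _ _) le_rfl
end Main

theorem stmt_16 {X Y : Type*} [MetricSpace X] [MetricSpace Y]
    (hnaX : ∀ x y z : X, dist x z ≤ max (dist x y) (dist y z))
    (hnaY : ∀ x y z : Y, dist x z ≤ max (dist x y) (dist y z))
    (hball : ∀ B : Set X, IsBall B → ∃ x ∈ B, ∃ y ∈ B, x ≠ y)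
    (lam : ℝ) (hlam : 0 < lam) (P₁ P₂ : BallSet X → Y) :
    betaStarL lam P₁ P₂ ≤ rhoSB P₁ P₂ ∧
    rhoSB P₁ P₂ ≤ betaL lam P₁ P₂ ∧
    rhoHB P₁ P₂ ≤ ENNReal.ofReal (max 1 lam) * betaStarL lam P₁ P₂ ∧
    (memDflatOne P₁ → memDflatOne P₂ →
      (rhoHB P₁ P₂ = rhoSB P₁ P₂ ∧
       rhoSB P₁ P₂ = betaL 1 P₁ P₂ ∧
       betaL 1 P₁ P₂ = betaStarL 1 P₁ P₂)) := by
  refine ⟨lemA hnaX hlam P₁ P₂, lemB hnaX hnaY hlam P₁ P₂, lemC hnaX hlam P₁ P₂,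
    fun h₁ h₂ => ?_⟩
  have hA1 := lemA hnaX one_pos P₁ P₂
  have hB1 := lemB hnaX hnaY one_pos P₁ P₂
  have hD := lemD hnaX hnaY P₁ P₂ h₁ h₂
  have hE := lemE hnaX hnaY P₁ P₂ h₂
  have hC1 : rhoHB P₁ P₂ ≤ betaStarL 1 P₁ P₂ := by
    simpa [max_self, ENNReal.ofReal_one, one_mul] using lemC hnaX one_pos P₁ P₂
  exact ⟨le_antisymm (hC1.trans hA1) hE,
    le_antisymm hB1 (hD.trans hA1),
    le_antisymm hD (hA1.trans hB1)⟩
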